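/- Let K be a linearly ordered field, let L be a totally positive lower triangular n×n matrix over K and let U be a totally positive upper triangular n×n matrix over K. Then both products L·U and U·L are totally positive, i.e., every minor of L·U and every minor of U·L is strictly positive. -/

import Mathlib

open Matrix Finset Equiv

/-- A matrix is totally positive if all its minors are strictly positive. -/
def IsTotallyPositive {K : Type*} [Field K] [LinearOrder K] [IsStrictOrderedRing K] {n : ℕ}
    (A : Matrix (Fin n) (Fin n) K) : Prop :=
  ∀ (p : ℕ) (r c : Fin p → Fin n), StrictMono r → StrictMono c →
    0 < (A.submatrix r c).det

/-- An upper triangular matrix is totally positive upper triangular if every minor on rows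
`i₁ < … < i_p` and columns `j₁ < … < j_p` with `i_k ≤ j_k` for all `k` is strictly positive. -/
def IsTotallyPositiveUpper {K : Type*} [Field K] [LinearOrder K] [IsStrictOrderedRing K] {n : ℕ}
    (A : Matrix (Fin n) (Fin n) K) : Prop :=
  (∀ i j : Fin n, j < i → A i j = 0) ∧
  ∀ (p : ℕ) (r c : Fin p → Fin n), StrictMono r → StrictMono c → (∀ k, r k ≤ c k) →
    0 < (A.submatrix r c).det

/-- A lower triangular matrix is totally positive lower triangular if every minor on rows
`i₁ < … < i_p` and columns `j₁ < … < j_p` with `i_k ≥ j_k` for all `k` is strictly positive. -/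
def IsTotallyPositiveLower {K : Type*} [Field K] [LinearOrder K] [IsStrictOrderedRing K] {n : ℕ}
    (A : Matrix (Fin n) (Fin n) K) : Prop :=
  (∀ i j : Fin n, i < j → A i j = 0) ∧
  ∀ (p : ℕ) (r c : Fin p → Fin n), StrictMono r → StrictMono c → (∀ k, c k ≤ r k) →
    0 < (A.submatrix r c).det


section CB
variable {K : Type*} [CommRing K] {p n : ℕ}

/-- The image of `g` as a finset, with its cardinality. -/
lemma image_card {g : Fin p → Fin n} (hg : Function.Injective g) :
    (Finset.univ.image g).card = p := by
  rw [Finset.card_image_of_injective _ hg, Finset.card_univ, Fintype.card_fin]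

/-- Sorted version of an injective map. -/
noncomputable def sortOf (g : Fin p → Fin n) (hg : Function.Injective g) : Fin p → Fin n :=
  ⇑((Finset.univ.image g).orderEmbOfFin (image_card hg))

lemma sortOf_strictMono (g : Fin p → Fin n) (hg : Function.Injective g) :
    StrictMono (sortOf g hg) :=
  OrderEmbedding.strictMono _

/-- The permutation relating an injective map to its sorted version. -/
noncomputable def permOf (g : Fin p → Fin n) (hg : Function.Injective g) :
    Equiv.Perm (Fin p) := by
  refine Equiv.ofBijective (fun i =>
    ((Finset.univ.image g).orderIsoOfFin (image_card hg)).symm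
      ⟨g i, Finset.mem_image_of_mem g (Finset.mem_univ i)⟩) ?_
  rw [← Finite.injective_iff_bijective]
  intro a b hab
  apply hg
  have := congrArg (fun x => (((Finset.univ.image g).orderIsoOfFin (image_card hg)) x : Fin n)) hab
  simpa using this

lemma sortOf_comp_permOf (g : Fin p → Fin n) (hg : Function.Injective g) (i : Fin p) :
    sortOf g hg (permOf g hg i) = g i := by
  simp [sortOf, permOf, Equiv.ofBijective_apply, ← Finset.coe_orderIsoOfFin_apply]

lemma sortOf_unique {g f : Fin p → Fin n} (hg : Function.Injective g) (hf : StrictMono f)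
    (σ : Equiv.Perm (Fin p)) (h : ∀ i, f (σ i) = g i) : sortOf g hg = f := by
  have himg : Finset.univ.image g = Finset.univ.image f := by
    ext x
    simp only [Finset.mem_image, Finset.mem_univ, true_and]
    constructor
    · rintro ⟨i, rfl⟩; exact ⟨σ i, h i⟩
    · rintro ⟨i, rfl⟩; exact ⟨σ.symm i, by rw [← h (σ.symm i), Equiv.apply_symm_apply]⟩
  exact (Finset.orderEmbOfFin_unique (image_card hg)
    (fun x => himg ▸ Finset.mem_image_of_mem f (Finset.mem_univ x)) hf).symm

end CB

section CB2
variable {K : Type*} [CommRing K] {p n : ℕ}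

open scoped Classical in
/-- The Cauchy–Binet formula. -/
theorem cauchyBinet (A : Matrix (Fin p) (Fin n) K) (B : Matrix (Fin n) (Fin p) K) :
    (A * B).det = ∑ f ∈ Finset.univ.filter (fun f : Fin p → Fin n => StrictMono f),
      (A.submatrix id f).det * (B.submatrix f id).det := by
  classical
  set F := (Matrix.detRowAlternating : (Fin p → K) [⋀^Fin p]→ₗ[K] K).toMultilinearMap with hF
  have hdet : ∀ M : Matrix (Fin p) (Fin p) K, M.det = F M := fun M => rfl
  have h1 : (A * B).det = ∑ g : Fin p → Fin n, (∏ i, A i (g i)) * (B.submatrix g id).det := by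
    have hAB : (A * B) = fun i => ∑ k, A i k • B k := by
      funext i j
      simp [Matrix.mul_apply, Finset.sum_apply]
    rw [hdet, hAB, F.map_sum]
    refine Finset.sum_congr rfl fun g _ => ?_
    have := F.map_smul_univ (fun i => A i (g i)) (fun i => B (g i))
    rw [this, smul_eq_mul, hdet]
    rfl
  rw [h1, ← Finset.sum_filter_add_sum_filter_not Finset.univ
    (fun g : Fin p → Fin n => Function.Injective g)]
  have h2 : ∑ g ∈ Finset.univ.filter (fun g : Fin p → Fin n => ¬ Function.Injective g),
      (∏ i, A i (g i)) * (B.submatrix g id).det = 0 := by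
    refine Finset.sum_eq_zero fun g hg => ?_
    rw [Finset.mem_filter] at hg
    obtain ⟨a, b, hab, hne⟩ := Function.not_injective_iff.mp hg.2
    rw [Matrix.det_zero_of_row_eq hne (by funext j; simp [Matrix.submatrix, hab]), mul_zero]
  rw [h2, add_zero]
  have h3 : ∀ f : Fin p → Fin n, (A.submatrix id f).det
      = ∑ σ : Equiv.Perm (Fin p), (Equiv.Perm.sign σ : K) * ∏ i, A i (f (σ i)) := by
    intro f
    rw [← Matrix.det_transpose, Matrix.det_apply']
    rfl
  rw [Finset.sum_congr rfl (fun f _ => by rw [h3, Finset.sum_mul] :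
    ∀ f ∈ Finset.univ.filter (fun f : Fin p → Fin n => StrictMono f),
      (A.submatrix id f).det * (B.submatrix f id).det
      = ∑ σ : Equiv.Perm (Fin p),
          ((Equiv.Perm.sign σ : K) * ∏ i, A i (f (σ i))) * (B.submatrix f id).det),
    ← Finset.sum_product']
  refine Finset.sum_bij'
    (i := fun g hg => (sortOf g (Finset.mem_filter.mp hg).2, permOf g (Finset.mem_filter.mp hg).2))
    (j := fun (x : (Fin p → Fin n) × Equiv.Perm (Fin p)) _ => x.1 ∘ x.2)
    ?_ ?_ ?_ ?_ ?_
  · -- i maps into pairs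
    intro g hg
    rw [Finset.mem_product, Finset.mem_filter]
    exact ⟨⟨Finset.mem_univ _, sortOf_strictMono g (Finset.mem_filter.mp hg).2⟩, Finset.mem_univ _⟩
  · -- j maps into injective functions
    rintro ⟨f, σ⟩ hx
    rw [Finset.mem_product, Finset.mem_filter] at hx
    rw [Finset.mem_filter]
    exact ⟨Finset.mem_univ _, hx.1.2.injective.comp σ.injective⟩
  · -- left inverse : j (i g) = g
    intro g hg
    funext i
    exact sortOf_comp_permOf g (Finset.mem_filter.mp hg).2 i
  · -- right inverse : i (j x) = x
    rintro ⟨f, σ⟩ hx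
    rw [Finset.mem_product, Finset.mem_filter] at hx
    have hinj : Function.Injective (f ∘ σ) := hx.1.2.injective.comp σ.injective
    have hsort : sortOf (f ∘ σ) hinj = f :=
      sortOf_unique hinj hx.1.2 σ (fun i => rfl)
    have hperm : permOf (f ∘ σ) hinj = σ := by
      refine Equiv.ext fun i => hx.1.2.injective ?_
      show f ((permOf (f ∘ σ) hinj) i) = f (σ i)
      rw [show f (permOf (f ∘ σ) hinj i) = sortOf (f ∘ σ) hinj (permOf (f ∘ σ) hinj i) by rw [hsort]]
      exact sortOf_comp_permOf (f ∘ σ) hinj i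
    have : (sortOf (f ∘ σ) hinj, permOf (f ∘ σ) hinj) = (f, σ) := by rw [hsort, hperm]
    convert this using 2
  · -- values agree
    intro g hg
    have hgi := (Finset.mem_filter.mp hg).2
    set f := sortOf g hgi with hf
    set σ := permOf g hgi with hσ
    have hcomp : f ∘ σ = g := funext (sortOf_comp_permOf g hgi)
    have hB : (B.submatrix g id).det = (Equiv.Perm.sign σ : K) * (B.submatrix f id).det := by
      rw [← hcomp, show B.submatrix (f ∘ σ) id = (B.submatrix f id).submatrix σ id from rfl,
        Matrix.det_permute]
    have hA : (∏ i, A i (g i)) = ∏ i, A i (f (σ i)) := by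
      rw [← hcomp]; rfl
    rw [hB, hA]
    ring

end CB2

section Tri
variable {K : Type*} [Field K] [LinearOrder K] [IsStrictOrderedRing K] {n p : ℕ}

/-- A minor of a lower triangular matrix with some row index below the column index vanishes. -/
lemma lower_minor_eq_zero {L : Matrix (Fin n) (Fin n) K}
    (hL0 : ∀ i j : Fin n, i < j → L i j = 0) {r c : Fin p → Fin n}
    (hr : Monotone r) (hc : Monotone c) {k0 : Fin p} (hk : r k0 < c k0) :
    (L.submatrix r c).det = 0 := by
  rw [Matrix.det_apply']
  refine Finset.sum_eq_zero fun σ _ => ?_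
  have hex : ∃ i, k0 ≤ i ∧ σ i ≤ k0 := by
    by_contra h
    push_neg at h
    have hsub : (Finset.Ici k0).image σ ⊆ Finset.Ioi k0 := by
      intro x hx
      rw [Finset.mem_image] at hx
      obtain ⟨i, hi, rfl⟩ := hx
      rw [Finset.mem_Ici] at hi
      rw [Finset.mem_Ioi]
      exact h i hi
    have hcard := Finset.card_le_card hsub
    rw [Finset.card_image_of_injective _ σ.injective, Fin.card_Ici, Fin.card_Ioi] at hcard
    have := k0.isLt
    omega
  obtain ⟨i, hi1, hi2⟩ := hex
  have hz : L.submatrix r c (σ i) i = 0 :=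
    hL0 _ _ (lt_of_le_of_lt (hr hi2) (lt_of_lt_of_le hk (hc hi1)))
  exact mul_eq_zero_of_right _ (Finset.prod_eq_zero (Finset.mem_univ i) hz)

/-- A minor of an upper triangular matrix with some column index below the row index vanishes. -/
lemma upper_minor_eq_zero {U : Matrix (Fin n) (Fin n) K}
    (hU0 : ∀ i j : Fin n, j < i → U i j = 0) {r c : Fin p → Fin n}
    (hr : Monotone r) (hc : Monotone c) {k0 : Fin p} (hk : c k0 < r k0) :
    (U.submatrix r c).det = 0 := by
  rw [Matrix.det_apply']
  refine Finset.sum_eq_zero fun σ _ => ?_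
  have hex : ∃ i, i ≤ k0 ∧ k0 ≤ σ i := by
    by_contra h
    push_neg at h
    have hsub : (Finset.Iic k0).image σ ⊆ Finset.Iio k0 := by
      intro x hx
      rw [Finset.mem_image] at hx
      obtain ⟨i, hi, rfl⟩ := hx
      rw [Finset.mem_Iic] at hi
      rw [Finset.mem_Iio]
      exact h i hi
    have hcard := Finset.card_le_card hsub
    rw [Finset.card_image_of_injective _ σ.injective, Fin.card_Iic, Fin.card_Iio] at hcard
    omega
  obtain ⟨i, hi1, hi2⟩ := hex
  have hz : U.submatrix r c (σ i) i = 0 :=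
    hU0 _ _ (lt_of_le_of_lt (hc hi1) (lt_of_lt_of_le hk (hr hi2)))
  exact mul_eq_zero_of_right _ (Finset.prod_eq_zero (Finset.mem_univ i) hz)

lemma lower_minor_nonneg {L : Matrix (Fin n) (Fin n) K} (hL : IsTotallyPositiveLower L)
    {r c : Fin p → Fin n} (hr : StrictMono r) (hc : StrictMono c) :
    0 ≤ (L.submatrix r c).det := by
  by_cases h : ∀ k, c k ≤ r k
  · exact le_of_lt (hL.2 p r c hr hc h)
  · push_neg at h
    obtain ⟨k0, hk0⟩ := h
    rw [lower_minor_eq_zero hL.1 hr.monotone hc.monotone hk0]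

lemma upper_minor_nonneg {U : Matrix (Fin n) (Fin n) K} (hU : IsTotallyPositiveUpper U)
    {r c : Fin p → Fin n} (hr : StrictMono r) (hc : StrictMono c) :
    0 ≤ (U.submatrix r c).det := by
  by_cases h : ∀ k, r k ≤ c k
  · exact le_of_lt (hU.2 p r c hr hc h)
  · push_neg at h
    obtain ⟨k0, hk0⟩ := h
    rw [upper_minor_eq_zero hU.1 hr.monotone hc.monotone hk0]

end Tri

open scoped Classical in
/-- The product of a totally positive lower triangular matrix and a totally positive upper
triangular matrix, in either order, is totally positive. -/
theorem totallyPositive_of_lower_mul_upper {K : Type*} [Field K] [LinearOrder K] [IsStrictOrderedRing K] {n : ℕ}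
    (L U : Matrix (Fin n) (Fin n) K)
    (hL : IsTotallyPositiveLower L) (hU : IsTotallyPositiveUpper U) :
    IsTotallyPositive (L * U) ∧ IsTotallyPositive (U * L) := by
  constructor
  · intro p r c hr hc
    rw [Matrix.submatrix_mul L U r (id : Fin n → Fin n) c Function.bijective_id, cauchyBinet]
    refine Finset.sum_pos' (fun f hf => ?_) ?_
    · rw [Finset.mem_filter] at hf
      have h1 : ((L.submatrix r id).submatrix id f) = L.submatrix r f := rfl
      have h2 : ((U.submatrix id c).submatrix f id) = U.submatrix f c := rfl
      rw [h1, h2]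
      exact mul_nonneg (lower_minor_nonneg hL hr hf.2) (upper_minor_nonneg hU hf.2 hc)
    · refine ⟨fun k => min (r k) (c k), ?_, ?_⟩
      · rw [Finset.mem_filter]
        exact ⟨Finset.mem_univ _, fun a b hab => lt_min
          (min_le_left _ _ |>.trans_lt (hr hab)) (min_le_right _ _ |>.trans_lt (hc hab))⟩
      · have hm : StrictMono (fun k => min (r k) (c k)) := fun a b hab => lt_min
          (min_le_left _ _ |>.trans_lt (hr hab)) (min_le_right _ _ |>.trans_lt (hc hab))
        have h1 : ((L.submatrix r id).submatrix id fun k => min (r k) (c k))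
            = L.submatrix r (fun k => min (r k) (c k)) := rfl
        have h2 : ((U.submatrix id c).submatrix (fun k => min (r k) (c k)) id)
            = U.submatrix (fun k => min (r k) (c k)) c := rfl
        rw [h1, h2]
        exact mul_pos (hL.2 p r _ hr hm fun k => min_le_left _ _)
          (hU.2 p _ c hm hc fun k => min_le_right _ _)
  · intro p r c hr hc
    rw [Matrix.submatrix_mul U L r (id : Fin n → Fin n) c Function.bijective_id, cauchyBinet]
    refine Finset.sum_pos' (fun f hf => ?_) ?_
    · rw [Finset.mem_filter] at hf
      have h1 : ((U.submatrix r id).submatrix id f) = U.submatrix r f := rfl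
      have h2 : ((L.submatrix id c).submatrix f id) = L.submatrix f c := rfl
      rw [h1, h2]
      exact mul_nonneg (upper_minor_nonneg hU hr hf.2) (lower_minor_nonneg hL hf.2 hc)
    · have hm : StrictMono (fun k => max (r k) (c k)) := fun a b hab => max_lt
        ((hr hab).trans_le (le_max_left _ _)) ((hc hab).trans_le (le_max_right _ _))
      refine ⟨fun k => max (r k) (c k), ?_, ?_⟩
      · rw [Finset.mem_filter]
        exact ⟨Finset.mem_univ _, hm⟩
      · have h1 : ((U.submatrix r id).submatrix id fun k => max (r k) (c k))
            = U.submatrix r (fun k => max (r k) (c k)) := rfl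
        have h2 : ((L.submatrix id c).submatrix (fun k => max (r k) (c k)) id)
            = L.submatrix (fun k => max (r k) (c k)) c := rfl
        rw [h1, h2]
        exact mul_pos (hU.2 p r _ hr hm fun k => le_max_left _ _)
          (hL.2 p _ c hm hc fun k => le_max_right _ _)
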